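/- arXiv:1607.08899 — 2 statements merged into one kernel-verified Lean document; each statement's English description precedes it below -/
import Mathlib

section
/- Let X, Y be geodesic metric spaces and f : X → Y a (K,C)-quasiisometric embedding that is a stable embedding, i.e., there is a Morse gauge N such that any two points of f(X) are connected by an N-Morse geodesic in Y. Then there exists a Morse gauge N' (depending only on K, C, N) such that for every geodesic segment σ in X, the image f(σ) is an N'-Morse (K,C)-quasigeodesic in Y. -/
open Set Metric Filter

/-- A map is a geodesic on the interval `I`: distances equal parameter differences. -/
def IsGeodesicOn {X : Type*} [MetricSpace X] (γ : ℝ → X) (I : Set ℝ) : Prop :=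
  ∀ s ∈ I, ∀ t ∈ I, dist (γ s) (γ t) = |s - t|

/-- A `(K,C)`-quasigeodesic on the interval `I`. -/
def IsQuasigeodesicOn {X : Type*} [MetricSpace X] (K C : ℝ) (q : ℝ → X) (I : Set ℝ) : Prop :=
  ∀ s ∈ I, ∀ t ∈ I,
    (1 / K) * |s - t| - C ≤ dist (q s) (q t) ∧ dist (q s) (q t) ≤ K * |s - t| + C

/-- The closed `r`-neighborhood of a subset. -/
def nbhd {X : Type*} [MetricSpace X] (A : Set X) (r : ℝ) : Set X :=
  {x | ∃ y ∈ A, dist x y ≤ r}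

/-- A path `γ` (on domain `I`) is `N`-Morse: every `(K,C)`-quasigeodesic with endpoints
on `γ` lies in the `N K C`-neighborhood of `γ`. -/
def IsMorseOn {X : Type*} [MetricSpace X] (N : ℝ → ℝ → ℝ) (γ : ℝ → X) (I : Set ℝ) : Prop :=
  ∀ K C : ℝ, 1 ≤ K → 0 ≤ C → ∀ (q : ℝ → X) (a b : ℝ), a ≤ b →
    IsQuasigeodesicOn K C q (Icc a b) → q a ∈ γ '' I → q b ∈ γ '' I →
    q '' Icc a b ⊆ nbhd (γ '' I) (N K C)

/-- A Morse gauge takes nonnegative values. -/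
def MorseGauge (N : ℝ → ℝ → ℝ) : Prop := ∀ K C : ℝ, 1 ≤ K → 0 ≤ C → 0 ≤ N K C

/-- A geodesic metric space: any two points are joined by a geodesic. -/
def GeodesicSpace (X : Type*) [MetricSpace X] : Prop :=
  ∀ x y : X, ∃ γ : ℝ → X, IsGeodesicOn γ (Icc 0 (dist x y)) ∧ γ 0 = x ∧ γ (dist x y) = y

/-- Discrete intermediate value: a chain with steps ≤ Δ from near 0 to near L passes
within Δ of every r ∈ [0,L]. -/
lemma chain_lemma (c : ℕ → ℝ) (n : ℕ) (Δ L r : ℝ) (_hΔ : 0 ≤ Δ)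
    (hr0 : 0 ≤ r) (hrL : r ≤ L)
    (h0 : c 0 ≤ Δ) (hn : L - Δ ≤ c n)
    (hstep : ∀ i < n, |c (i+1) - c i| ≤ Δ) :
    ∃ i ≤ n, |c i - r| ≤ Δ := by
  classical
  by_cases hcn : c n ≤ r
  · refine ⟨n, le_refl n, ?_⟩
    rw [abs_sub_comm, abs_of_nonneg (by linarith)]; linarith
  push_neg at hcn
  by_cases hc0 : r < c 0
  · refine ⟨0, Nat.zero_le n, ?_⟩
    rw [abs_of_nonneg (by linarith)]; linarith
  push_neg at hc0
  have hex : ∃ m, r < c m := ⟨n, hcn⟩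
  set m := Nat.find hex with hm
  have hmlt : r < c m := Nat.find_spec hex
  have hm0 : m ≠ 0 := by intro h; rw [h] at hmlt; linarith
  have hmn : m ≤ n := Nat.find_min' hex hcn
  obtain ⟨k, hk⟩ := Nat.exists_eq_succ_of_ne_zero hm0
  have hk_le : c k ≤ r := by
    have := Nat.find_min hex (show k < m by omega)
    push_neg at this; exact this
  have hkn : k < n := by omega
  have hstepk : c (k+1) - c k ≤ Δ := le_trans (le_abs_self _) (hstep k hkn)
  refine ⟨k, by omega, ?_⟩
  rw [abs_sub_comm, abs_of_nonneg (by linarith)]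
  have hmlt' : r < c (k+1) := by rw [hk] at hmlt; exact hmlt
  linarith

lemma nbhd_mono {X : Type*} [MetricSpace X] {A B : Set X} {r : ℝ} (h : A ⊆ B) :
    nbhd A r ⊆ nbhd B r := by
  rintro x ⟨y, hy, hd⟩; exact ⟨y, h hy, hd⟩

lemma nbhd_trans {X : Type*} [MetricSpace X] {A B : Set X} {r ρ : ℝ}
    (h : A ⊆ nbhd B r) : nbhd A ρ ⊆ nbhd B (ρ + r) := by
  rintro x ⟨y, hy, hd⟩
  obtain ⟨z, hz, hd2⟩ := h hy
  exact ⟨z, hz, le_trans (dist_triangle x y z) (by linarith)⟩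

/-- Key lemma: if a geodesic g and a (K,C)-quasigeodesic γ share endpoints and
γ lies in the Nv-neighborhood of g, then g lies in the (3Nv+K+C)-neighborhood of γ. -/
lemma key_lemma {Y : Type*} [MetricSpace Y] (K C Nv : ℝ) (hK : 1 ≤ K) (hC : 0 ≤ C)
    (hNv : 0 ≤ Nv) (g : ℝ → Y) (L : ℝ) (hL : 0 ≤ L)
    (hg : IsGeodesicOn g (Icc 0 L)) (γ : ℝ → Y) (s t : ℝ) (hst : s ≤ t)
    (hγ : IsQuasigeodesicOn K C γ (Icc s t))
    (h0 : g 0 = γ s) (hLe : g L = γ t)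
    (hnb : γ '' Icc s t ⊆ nbhd (g '' Icc 0 L) Nv) :
    g '' Icc 0 L ⊆ nbhd (γ '' Icc s t) (3 * Nv + K + C) := by
  classical
  have hK0 : (0:ℝ) < K := lt_of_lt_of_le one_pos hK
  -- choice of close points on g
  have hch : ∀ u : ℝ, ∃ r, r ∈ Icc 0 L ∧ (u ∈ Icc s t → dist (γ u) (g r) ≤ Nv) := by
    intro u
    by_cases hu : u ∈ Icc s t
    · obtain ⟨y, ⟨r, hr, rfl⟩, hd⟩ := hnb ⟨u, hu, rfl⟩
      exact ⟨r, hr, fun _ => hd⟩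
    · exact ⟨0, ⟨le_refl 0, hL⟩, fun h => absurd h hu⟩
  choose φ hφmem hφd using hch
  set Δ : ℝ := 2 * Nv + K + C with hΔdef
  have hΔ0 : 0 ≤ Δ := by positivity
  -- step estimate
  have hstep : ∀ u ∈ Icc s t, ∀ v ∈ Icc s t, |u - v| ≤ 1 → |φ u - φ v| ≤ Δ := by
    intro u hu v hv huv
    have e1 : dist (g (φ u)) (g (φ v)) = |φ u - φ v| := hg _ (hφmem u) _ (hφmem v)
    have e2 : dist (γ u) (γ v) ≤ K * |u - v| + C := (hγ u hu v hv).2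
    have e3 : dist (γ u) (g (φ u)) ≤ Nv := hφd u hu
    have e4 : dist (γ v) (g (φ v)) ≤ Nv := hφd v hv
    have tri : dist (g (φ u)) (g (φ v)) ≤
        dist (g (φ u)) (γ u) + dist (γ u) (γ v) + dist (γ v) (g (φ v)) :=
      dist_triangle4 _ _ _ _
    rw [dist_comm (g (φ u)) (γ u)] at tri
    have hKuv : K * |u - v| ≤ K * 1 := by
      apply mul_le_mul_of_nonneg_left huv (le_of_lt hK0)
    rw [← e1]
    calc dist (g (φ u)) (g (φ v)) ≤ Nv + (K * |u - v| + C) + Nv := by linarith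
      _ ≤ Δ := by rw [hΔdef]; linarith
  have hsmem : s ∈ Icc s t := ⟨le_refl s, hst⟩
  have htmem : t ∈ Icc s t := ⟨hst, le_refl t⟩
  -- endpoint estimates
  have hφs : φ s ≤ Δ := by
    have e : dist (g (φ s)) (g 0) = |φ s - 0| := hg _ (hφmem s) _ ⟨le_refl 0, hL⟩
    have : dist (g (φ s)) (g 0) ≤ Nv := by
      rw [h0, dist_comm]; exact hφd s hsmem
    rw [e, sub_zero] at this
    have := le_trans (le_abs_self _) this
    rw [hΔdef]; linarith
  have hφt : L - Δ ≤ φ t := by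
    have e : dist (g (φ t)) (g L) = |φ t - L| := hg _ (hφmem t) _ ⟨hL, le_refl L⟩
    have h1 : |φ t - L| ≤ Nv := by
      rw [← e, hLe, dist_comm]; exact hφd t htmem
    have := (abs_le.mp h1).1
    rw [hΔdef]; linarith
  -- partition
  set n : ℕ := max (Nat.ceil (t - s)) 1 with hn
  have hn1 : 1 ≤ n := le_max_right _ _
  have hnpos : (0:ℝ) < n := by exact_mod_cast Nat.lt_of_lt_of_le Nat.zero_lt_one hn1
  have hts : t - s ≤ n := by
    calc t - s ≤ (Nat.ceil (t - s) : ℝ) := Nat.le_ceil _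
      _ ≤ n := by exact_mod_cast le_max_left _ _
  set u : ℕ → ℝ := fun i => s + (t - s) * i / n with hu
  have hu0 : u 0 = s := by simp [hu]
  have hun : u n = t := by
    rw [hu]; field_simp; ring
  have hts0 : 0 ≤ t - s := by linarith
  have humem : ∀ i ≤ n, u i ∈ Icc s t := by
    intro i hi
    have hi' : (i:ℝ) ≤ n := by exact_mod_cast hi
    constructor
    · have : 0 ≤ (t - s) * i / n :=
        div_nonneg (mul_nonneg hts0 (by positivity)) (le_of_lt hnpos)
      simp only [hu]; linarith
    · have : (t - s) * i / n ≤ (t - s) * n / n :=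
        (div_le_div_iff_of_pos_right hnpos).mpr (mul_le_mul_of_nonneg_left hi' hts0)
      have heq : (t - s) * n / n = t - s := by field_simp
      simp only [hu]; rw [heq] at this; linarith
  have hustep : ∀ i : ℕ, |u (i+1) - u i| ≤ 1 := by
    intro i
    have : u (i+1) - u i = (t - s) / n := by
      simp only [hu]; push_cast; ring
    rw [this, abs_of_nonneg (div_nonneg hts0 (le_of_lt hnpos))]
    rw [div_le_one hnpos]; linarith
  -- apply chain lemma
  rintro x ⟨r, hr, rfl⟩
  obtain ⟨i, hin, hci⟩ := chain_lemma (fun i => φ (u i)) n Δ L r hΔ0 hr.1 hr.2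
    (by show φ (u 0) ≤ Δ; rw [hu0]; exact hφs)
    (by show L - Δ ≤ φ (u n); rw [hun]; exact hφt)
    (fun i hi => hstep _ (humem (i+1) hi) _ (humem i (le_of_lt hi)) (hustep i))
  refine ⟨γ (u i), ⟨u i, humem i hin, rfl⟩, ?_⟩
  have e1 : dist (g r) (g (φ (u i))) = |r - φ (u i)| := hg _ hr _ (hφmem (u i))
  have e2 : dist (γ (u i)) (g (φ (u i))) ≤ Nv := hφd (u i) (humem i hin)
  calc dist (g r) (γ (u i)) ≤ dist (g r) (g (φ (u i))) + dist (g (φ (u i))) (γ (u i)) :=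
        dist_triangle _ _ _
    _ ≤ |r - φ (u i)| + Nv := by rw [e1, dist_comm (g (φ (u i)))]; linarith
    _ ≤ Δ + Nv := by rw [abs_sub_comm]; linarith [hci]
    _ = 3 * Nv + K + C := by rw [hΔdef]; ring

/-- a stable (K,C)-quasiisometric embedding sends geodesic segments to
uniformly Morse (K,C)-quasigeodesics: there is a gauge N' depending only on K, C, N. -/
theorem stmt16 (K C : ℝ) (hK : 1 ≤ K) (hC : 0 ≤ C)
    (N : ℝ → ℝ → ℝ) (hN : MorseGauge N) :
    ∃ N' : ℝ → ℝ → ℝ, MorseGauge N' ∧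
      ∀ (X Y : Type) [MetricSpace X] [MetricSpace Y],
        GeodesicSpace X → GeodesicSpace Y →
      ∀ f : X → Y,
        (∀ x x' : X, (1 / K) * dist x x' - C ≤ dist (f x) (f x') ∧
          dist (f x) (f x') ≤ K * dist x x' + C) →
        (∀ x x' : X, ∃ (g : ℝ → Y) (L : ℝ), L = dist (f x) (f x') ∧
          IsGeodesicOn g (Icc 0 L) ∧ g 0 = f x ∧ g L = f x' ∧ IsMorseOn N g (Icc 0 L)) →
      ∀ (σ : ℝ → X) (a b : ℝ), a ≤ b → IsGeodesicOn σ (Icc a b) →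
        IsQuasigeodesicOn K C (f ∘ σ) (Icc a b) ∧ IsMorseOn N' (f ∘ σ) (Icc a b) := by
  have hNKC : 0 ≤ N K C := hN K C hK hC
  refine ⟨fun K' C' => N K' C' + (3 * N K C + K + C), ?_, ?_⟩
  · intro K' C' hK' hC'
    have := hN K' C' hK' hC'
    show 0 ≤ N K' C' + (3 * N K C + K + C)
    linarith
  intro X Y _ _ hX hY f hf hstab σ a b hab hσ
  -- part 1: quasigeodesic
  have hQ : IsQuasigeodesicOn K C (f ∘ σ) (Icc a b) := by
    intro s hs t ht
    have hd : dist (σ s) (σ t) = |s - t| := hσ s hs t ht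
    have := hf (σ s) (σ t)
    rw [hd] at this
    exact this
  refine ⟨hQ, ?_⟩
  -- part 2: Morse
  intro K' C' hK' hC' q α β hαβ hq hqα hqβ
  obtain ⟨s, hs, hfs⟩ := hqα
  obtain ⟨t, ht, hft⟩ := hqβ
  obtain ⟨g, L, hLdef, hgeo, hg0, hgL, hgM⟩ := hstab (σ s) (σ t)
  have hL : 0 ≤ L := hLdef ▸ dist_nonneg
  have h0mem : (0:ℝ) ∈ Icc 0 L := ⟨le_refl 0, hL⟩
  have hLmem : L ∈ Icc 0 L := ⟨hL, le_refl L⟩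
  -- q lies close to g
  have hq_near_g : q '' Icc α β ⊆ nbhd (g '' Icc 0 L) (N K' C') := by
    apply hgM K' C' hK' hC' q α β hαβ hq
    · exact ⟨0, h0mem, by rw [hg0]; exact hfs⟩
    · exact ⟨L, hLmem, by rw [hgL]; exact hft⟩
  -- g lies close to f ∘ σ image
  have hg_near : g '' Icc 0 L ⊆ nbhd ((f ∘ σ) '' Icc a b) (3 * N K C + K + C) := by
    rcases le_total s t with hst | hst
    · -- γ = f ∘ σ on [s, t]
      have hsub : Icc s t ⊆ Icc a b := Icc_subset_Icc hs.1 ht.2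
      have hγq : IsQuasigeodesicOn K C (f ∘ σ) (Icc s t) :=
        fun u hu v hv => hQ u (hsub hu) v (hsub hv)
      have hnb : (f ∘ σ) '' Icc s t ⊆ nbhd (g '' Icc 0 L) (N K C) := by
        apply hgM K C hK hC (f ∘ σ) s t hst hγq
        · exact ⟨0, h0mem, hg0⟩
        · exact ⟨L, hLmem, hgL⟩
      have := key_lemma K C (N K C) hK hC hNKC g L hL hgeo (f ∘ σ) s t hst hγq
        hg0 hgL hnb
      exact fun x hx => nbhd_mono (image_mono hsub) (this hx)
    · -- reflected: γ u = (f ∘ σ) (s + t - u) on [t, s]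
      set γ' : ℝ → Y := fun u => (f ∘ σ) (s + t - u) with hγ'
      have hrefl : ∀ u ∈ Icc t s, s + t - u ∈ Icc t s := by
        intro u hu; constructor <;> [linarith [hu.2]; linarith [hu.1]]
      have hsub : Icc t s ⊆ Icc a b := Icc_subset_Icc ht.1 hs.2
      have hγq : IsQuasigeodesicOn K C γ' (Icc t s) := by
        intro u hu v hv
        have := hQ (s + t - u) (hsub (hrefl u hu)) (s + t - v) (hsub (hrefl v hv))
        have habs : |s + t - u - (s + t - v)| = |u - v| := by
          rw [show s + t - u - (s + t - v) = -(u - v) by ring, abs_neg]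
        rw [habs] at this
        exact this
      have hγt : γ' t = g 0 := by
        simp only [hγ', show s + t - t = s by ring]; exact hg0.symm
      have hγs : γ' s = g L := by
        simp only [hγ', show s + t - s = t by ring]; exact hgL.symm
      have hnb : γ' '' Icc t s ⊆ nbhd (g '' Icc 0 L) (N K C) := by
        apply hgM K C hK hC γ' t s hst hγq
        · exact ⟨0, h0mem, hγt.symm⟩
        · exact ⟨L, hLmem, hγs.symm⟩
      have hkey := key_lemma K C (N K C) hK hC hNKC g L hL hgeo γ' t s hst hγq
        hγt.symm hγs.symm hnb
      have himg : γ' '' Icc t s ⊆ (f ∘ σ) '' Icc a b := by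
        rintro x ⟨v, hv, rfl⟩
        exact ⟨s + t - v, hsub (hrefl v hv), rfl⟩
      exact fun x hx => nbhd_mono himg (hkey hx)
  exact fun x hx => nbhd_trans hg_near (nbhd_mono (fun y hy => hy) (hq_near_g hx))
end

section
/- Let X be a geodesic metric space, let γ : ℝ → X be a biinfinite geodesic with γ(0) a closest point of γ to a point e, and let u ∈ [e, γ(0)] and v ∈ γ([0, t']) for some t' ≥ 0. Then d(u,v) ≤ d(u, γ(0)) + d(γ(0), v) ≤ 3·d(u,v); i.e., the concatenation [e,γ(0)] ∪ γ([0,t']) is a (3,0)-quasigeodesic when restricted to pairs with one point in each segment. -/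
open Set Metric Filter

/-- if γ(0) is a closest point of the biinfinite geodesic γ to e, then for
u on a geodesic [e,γ(0)] and v on γ([0,t']), the path through γ(0) is a (3,0)-quasigeodesic:
d(u,v) ≤ d(u,γ(0)) + d(γ(0),v) ≤ 3 d(u,v). -/
theorem stmt17 {X : Type*} [MetricSpace X] (hX : GeodesicSpace X) (e : X)
    (γ : ℝ → X) (hγ : IsGeodesicOn γ univ)
    (hcl : ∀ s : ℝ, dist e (γ 0) ≤ dist e (γ s))
    (c : ℝ → X) (L : ℝ) (hL : L = dist e (γ 0))
    (hc : IsGeodesicOn c (Icc 0 L)) (hca : c 0 = e) (hcb : c L = γ 0)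
    (t' : ℝ) (ht' : 0 ≤ t')
    (u v : X) (hu : u ∈ c '' Icc 0 L) (hv : v ∈ γ '' Icc 0 t') :
    dist u v ≤ dist u (γ 0) + dist (γ 0) v ∧
    dist u (γ 0) + dist (γ 0) v ≤ 3 * dist u v := by
  obtain ⟨s, hs, rfl⟩ := hu
  have hL0 : 0 ≤ L := hL ▸ dist_nonneg
  have hdu : dist (c s) (γ 0) = L - s := by
    have := hc s hs L ⟨hL0, le_refl L⟩
    rw [hcb] at this
    rw [this, abs_of_nonpos (by linarith [hs.2])]; ring
  have hdeu : dist e (c s) = s := by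
    have := hc 0 ⟨le_refl 0, hL0⟩ s hs
    rw [hca] at this
    rw [this, zero_sub, abs_neg, abs_of_nonneg hs.1]
  have hev : L ≤ dist e v := by
    obtain ⟨t, ht, rfl⟩ := hv
    rw [hL]; exact hcl t
  have h1 : dist (c s) (γ 0) ≤ dist (c s) v := by
    have := dist_triangle e (c s) v
    rw [hdu]
    linarith [hdeu]
  have h2 : dist (γ 0) v ≤ dist (γ 0) (c s) + dist (c s) v := dist_triangle _ _ _
  rw [dist_comm (γ 0) (c s)] at h2
  exact ⟨dist_triangle _ _ _, by linarith⟩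
end
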